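/- For every positive integer n there exists a 4×4 Hermitian complex matrix D whose entries sum to 1, such that (i) for every vector u ∈ ℂ^(4^n) all of whose entries are 0 or 1, the quadratic form ⟨u, D^{⊗n} u⟩ is a nonnegative real number (so the n-fold Kronecker power D^{⊗n} is a decoherence functional), but (ii) there exists a vector w ∈ ℂ^(4^(n+1)) all of whose entries are 0 or 1 such that ⟨w, D^{⊗(n+1)} w⟩ is a negative real number (so D^{⊗(n+1)} is not a decoherence functional). -/

import Mathlib

open Matrix BigOperators ComplexOrder

/-- The `n`-fold Kronecker power of a 4×4 complex matrix, with rows and columns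
indexed by functions `Fin n → Fin 4` via the standard identification. -/
noncomputable def kronPow (D : Matrix (Fin 4) (Fin 4) ℂ) (n : ℕ) :
    Matrix (Fin n → Fin 4) (Fin n → Fin 4) ℂ :=
  Matrix.of fun f g => ∏ k, D (f k) (g k)

section DFAux
open Complex

noncomputable def dfTheta (n : ℕ) : ℝ := Real.pi / (2 * n)
noncomputable def dfRho (n : ℕ) : ℝ := (Real.sin (dfTheta n))⁻¹ + 1
noncomputable def dfC (n : ℕ) : ℂ := (dfRho n : ℂ) * Complex.exp ((dfTheta n : ℂ) * Complex.I)
noncomputable def dfLam (n : ℕ) : ℝ := (2 + 2 * dfRho n * Real.cos (dfTheta n))⁻¹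
noncomputable def dfD (n : ℕ) : Matrix (Fin 4) (Fin 4) ℂ :=
  !![0,0,0,0; 0,0,0,0; 0,0,(dfLam n : ℂ), (dfLam n : ℂ) * dfC n;
     0,0,(dfLam n : ℂ) * (starRingEnd ℂ) (dfC n), (dfLam n : ℂ)]

lemma conj_dfC (n : ℕ) :
    (starRingEnd ℂ) (dfC n) = (dfRho n : ℂ) * Complex.exp ((-(dfTheta n) : ℝ) * Complex.I) := by
  rw [dfC, _root_.map_mul, ← Complex.exp_conj]
  simp [Complex.conj_ofReal]

lemma dfD_cases (n : ℕ) (i j : Fin 4) : dfD n i j = 0 ∨ dfD n i j = (dfLam n : ℂ) ∨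
    dfD n i j = (dfLam n : ℂ) * dfC n ∨ dfD n i j = (dfLam n : ℂ) * (starRingEnd ℂ) (dfC n) := by
  fin_cases i <;> fin_cases j <;> simp [dfD] <;> tauto

lemma sin_pos (n : ℕ) (hn : 0 < n) : 0 < Real.sin (dfTheta n) := by
  have h1 : 0 < dfTheta n := by
    apply div_pos Real.pi_pos; positivity
  have h2 : dfTheta n ≤ Real.pi / 2 := by
    rw [dfTheta, div_le_div_iff₀ (by positivity) (by norm_num)]
    have : (1:ℝ) ≤ n := by exact_mod_cast hn
    nlinarith [Real.pi_pos]
  exact Real.sin_pos_of_pos_of_lt_pi h1 (lt_of_le_of_lt h2 (by linarith [Real.pi_pos]))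

lemma rho_pos (n : ℕ) (hn : 0 < n) : 0 < dfRho n := by
  have := sin_pos n hn; rw [dfRho]; positivity

lemma lam_pos (n : ℕ) (hn : 0 < n) : 0 < dfLam n := by
  have h1 : 0 ≤ Real.cos (dfTheta n) := by
    apply Real.cos_nonneg_of_mem_Icc
    constructor
    · have : 0 < dfTheta n := div_pos Real.pi_pos (by positivity)
      linarith [Real.pi_pos]
    · rw [dfTheta, div_le_div_iff₀ (by positivity) (by norm_num)]
      have : (1:ℝ) ≤ n := by exact_mod_cast hn
      nlinarith [Real.pi_pos]
  have := rho_pos n hn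
  rw [dfLam]; positivity

lemma prod_form (n N : ℕ) (hn : 0 < n) (f g : Fin N → Fin 4) (s : Finset (Fin N)) :
    ∃ (r : ℝ) (m : ℤ), 0 ≤ r ∧ m.natAbs ≤ s.card ∧
      ∏ k ∈ s, dfD n (f k) (g k) = (r : ℂ) * Complex.exp (((dfTheta n * m : ℝ)) * Complex.I) := by
  classical
  induction s using Finset.induction_on with
  | empty => exact ⟨1, 0, by norm_num⟩
  | @insert a s ha ih =>
    obtain ⟨r, m, hr, hm, he⟩ := ih
    have hcard : (insert a s).card = s.card + 1 := Finset.card_insert_of_notMem ha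
    rw [Finset.prod_insert ha, he]
    rcases dfD_cases n (f a) (g a) with h | h | h | h
    · exact ⟨0, 0, le_refl 0, by simp, by rw [h]; simp⟩
    · refine ⟨dfLam n * r, m, mul_nonneg (lam_pos n hn).le hr, by omega, ?_⟩
      rw [h]; push_cast; ring
    · refine ⟨dfLam n * dfRho n * r, m + 1,
        mul_nonneg (mul_nonneg (lam_pos n hn).le (rho_pos n hn).le) hr, by omega, ?_⟩
      rw [h, dfC,
        show ((dfTheta n * ((m + 1 : ℤ) : ℝ) : ℝ) : ℂ) * Complex.I
            = ((dfTheta n * (m : ℤ) : ℝ) : ℂ) * Complex.I + (dfTheta n : ℂ) * Complex.I by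
          push_cast; ring,
        Complex.exp_add]
      push_cast; ring
    · refine ⟨dfLam n * dfRho n * r, m - 1,
        mul_nonneg (mul_nonneg (lam_pos n hn).le (rho_pos n hn).le) hr, by omega, ?_⟩
      rw [h, conj_dfC,
        show ((dfTheta n * ((m - 1 : ℤ) : ℝ) : ℝ) : ℂ) * Complex.I
            = ((dfTheta n * (m : ℤ) : ℝ) : ℂ) * Complex.I + ((-(dfTheta n) : ℝ) : ℂ) * Complex.I by
          push_cast; ring,
        Complex.exp_add]
      push_cast; ring

lemma theta_mul_n (n : ℕ) (hn : 0 < n) : dfTheta n * n = Real.pi / 2 := by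
  rw [dfTheta]
  have : (n : ℝ) ≠ 0 := by positivity
  field_simp

lemma theta_nonneg (n : ℕ) : 0 ≤ dfTheta n := by
  rw [dfTheta]; positivity

lemma entry_re_nonneg (n : ℕ) (hn : 0 < n) (f g : Fin n → Fin 4) :
    0 ≤ (kronPow (dfD n) n f g).re := by
  obtain ⟨r, m, hr, hm, he⟩ := prod_form n n hn f g Finset.univ
  simp only [Finset.card_univ, Fintype.card_fin] at hm
  have : kronPow (dfD n) n f g = (r : ℂ) * Complex.exp (((dfTheta n * m : ℝ)) * Complex.I) := he
  rw [this]
  rw [Complex.re_ofReal_mul, Complex.exp_ofReal_mul_I_re]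
  apply mul_nonneg hr
  apply Real.cos_nonneg_of_mem_Icc
  have habs : |(m : ℝ)| ≤ (n : ℝ) := by
    rw [← Int.cast_abs]
    have : |m| ≤ (n : ℤ) := by rw [Int.abs_eq_natAbs]; exact_mod_cast hm
    exact_mod_cast this
  have h1 := theta_mul_n n hn
  have h2 := theta_nonneg n
  have h3 : |dfTheta n * (m:ℝ)| ≤ Real.pi / 2 := by
    rw [abs_mul, _root_.abs_of_nonneg h2]
    calc dfTheta n * |(m:ℝ)| ≤ dfTheta n * n := by nlinarith
    _ = Real.pi / 2 := h1
  rw [abs_le] at h3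
  exact ⟨h3.1, h3.2⟩

lemma cos_theta_nonneg (n : ℕ) (hn : 0 < n) : 0 ≤ Real.cos (dfTheta n) := by
  apply Real.cos_nonneg_of_mem_Icc
  constructor
  · have : 0 < dfTheta n := div_pos Real.pi_pos (by positivity)
    linarith [Real.pi_pos]
  · rw [dfTheta, div_le_div_iff₀ (by positivity) (by norm_num)]
    have : (1:ℝ) ≤ n := by exact_mod_cast hn
    nlinarith [Real.pi_pos]

lemma dfD_conj (n : ℕ) (i j : Fin 4) : (starRingEnd ℂ) (dfD n i j) = dfD n j i := by
  fin_cases i <;> fin_cases j <;> simp [dfD, Matrix.vecHead, Matrix.vecTail]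

lemma dfD_herm (n : ℕ) : (dfD n).IsHermitian := by
  ext i j
  rw [conjTranspose_apply]
  exact dfD_conj n j i

lemma kron_conj (n N : ℕ) (f g : Fin N → Fin 4) :
    (starRingEnd ℂ) (kronPow (dfD n) N f g) = kronPow (dfD n) N g f := by
  show (starRingEnd ℂ) (∏ k, dfD n (f k) (g k)) = ∏ k, dfD n (g k) (f k)
  rw [map_prod]
  exact Finset.prod_congr rfl fun k _ => dfD_conj n (f k) (g k)

lemma dfD_sum (n : ℕ) (hn : 0 < n) : (∑ i, ∑ j, dfD n i j) = 1 := by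
  have h2 : 0 < 2 + 2 * dfRho n * Real.cos (dfTheta n) := by
    have := rho_pos n hn; have := cos_theta_nonneg n hn; nlinarith
  have h1 : (∑ i, ∑ j, dfD n i j)
      = ((dfLam n * (2 + 2 * dfRho n * Real.cos (dfTheta n)) : ℝ) : ℂ) := by
    rw [Fin.sum_univ_four]
    simp [Fin.sum_univ_four, dfD, Matrix.vecHead, Matrix.vecTail]
    rw [conj_dfC, dfC, Complex.exp_mul_I, Complex.exp_mul_I]
    simp only [← Complex.ofReal_cos, ← Complex.ofReal_sin, Real.cos_neg, Real.sin_neg]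
    push_cast
    ring
  rw [h1, show (1:ℂ) = ((1:ℝ):ℂ) by norm_num]
  congr 1
  rw [dfLam]
  exact inv_mul_cancel₀ h2.ne'

lemma quad_nonneg (n : ℕ) (hn : 0 < n) (u : (Fin n → Fin 4) → ℂ)
    (hu : ∀ i, u i = 0 ∨ u i = 1) :
    0 ≤ star u ⬝ᵥ (kronPow (dfD n) n).mulVec u := by
  set M := kronPow (dfD n) n with hM
  have hQ : star u ⬝ᵥ M.mulVec u
      = ∑ f, ∑ g, (starRingEnd ℂ) (u f) * (M f g * u g) := by
    simp [dotProduct, Matrix.mulVec, Finset.mul_sum]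
  rw [hQ, Complex.le_def]
  constructor
  · simp only [Complex.re_sum, Complex.zero_re]
    apply Finset.sum_nonneg; intro f _
    apply Finset.sum_nonneg; intro g _
    rcases hu f with h1 | h1 <;> rcases hu g with h2 | h2 <;>
      simp [h1, h2, hM, entry_re_nonneg n hn f g]
  · have hc : ∀ i, (starRingEnd ℂ) (u i) = u i := by
      intro i; rcases hu i with h | h <;> simp [h]
    have key : ∀ f g, ((starRingEnd ℂ) (u f) * (M f g * u g)).im
        = - ((starRingEnd ℂ) (u g) * (M g f * u f)).im := by
      intro f g
      have : (starRingEnd ℂ) ((starRingEnd ℂ) (u g) * (M g f * u f))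
          = (starRingEnd ℂ) (u f) * (M f g * u g) := by
        rw [_root_.map_mul, _root_.map_mul, Complex.conj_conj, hc f,
          show (starRingEnd ℂ) (M g f) = M f g from kron_conj n n g f]
        ring
      rw [← this, Complex.conj_im]
    have him : (∑ f, ∑ g, (starRingEnd ℂ) (u f) * (M f g * u g)).im
        = - (∑ f, ∑ g, (starRingEnd ℂ) (u f) * (M f g * u g)).im := by
      simp only [Complex.im_sum]
      conv_lhs => rw [Finset.sum_comm]
      rw [show (∑ g : Fin n → Fin 4, ∑ f : Fin n → Fin 4,
            ((starRingEnd ℂ) (u f) * (M f g * u g)).im)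
          = ∑ g : Fin n → Fin 4, ∑ f : Fin n → Fin 4,
            (- ((starRingEnd ℂ) (u g) * (M g f * u f)).im) from
        Finset.sum_congr rfl fun g _ => Finset.sum_congr rfl fun f _ => key f g]
      simp only [Finset.sum_neg_distrib]
    simp only [Complex.zero_im]
    linarith [him]

lemma violation (n : ℕ) (hn : 0 < n) :
    ∃ w : (Fin (n + 1) → Fin 4) → ℂ, (∀ i, w i = 0 ∨ w i = 1) ∧
      star w ⬝ᵥ (kronPow (dfD n) (n + 1)).mulVec w < 0 := by
  classical
  set c2 : Fin (n + 1) → Fin 4 := fun _ => 2 with hc2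
  set c3 : Fin (n + 1) → Fin 4 := fun _ => 3 with hc3
  have hne : c2 ≠ c3 := by
    intro h
    have := congrFun h 0
    simp [hc2, hc3] at this
  set w : (Fin (n + 1) → Fin 4) → ℂ := Pi.single c2 1 + Pi.single c3 1 with hw
  have hw01 : ∀ i, w i = 0 ∨ w i = 1 := by
    intro i
    by_cases h2 : i = c2
    · right; subst h2; simp [hw, Pi.single_apply, hne]
    by_cases h3 : i = c3
    · right; subst h3; simp [hw, Pi.single_apply, Ne.symm hne]
    · left; simp [hw, Pi.single_apply, h2, h3]
  have hstar : star w = w := by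
    funext i
    rw [Pi.star_apply]
    rcases hw01 i with h | h <;> rw [h] <;> simp
  refine ⟨w, hw01, ?_⟩
  rw [hstar]
  set M := kronPow (dfD n) (n + 1) with hM
  have hQ : w ⬝ᵥ M.mulVec w = M c2 c2 + M c2 c3 + M c3 c2 + M c3 c3 := by
    rw [hw]
    simp [Matrix.mulVec_add, dotProduct_add, add_dotProduct,
      Matrix.mulVec_single, single_dotProduct]
    ring
  have e22 : M c2 c2 = ((dfLam n : ℂ)) ^ (n + 1) := by
    show (∏ _k : Fin (n + 1), dfD n 2 2) = _
    simp [dfD, Matrix.vecHead, Matrix.vecTail, Finset.prod_const]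
  have e33 : M c3 c3 = ((dfLam n : ℂ)) ^ (n + 1) := by
    show (∏ _k : Fin (n + 1), dfD n 3 3) = _
    simp [dfD, Matrix.vecHead, Matrix.vecTail, Finset.prod_const]
  have e23 : M c2 c3 = ((dfLam n : ℂ) * dfC n) ^ (n + 1) := by
    show (∏ _k : Fin (n + 1), dfD n 2 3) = _
    simp [dfD, Matrix.vecHead, Matrix.vecTail, Finset.prod_const]
  have e32 : M c3 c2 = ((dfLam n : ℂ) * (starRingEnd ℂ) (dfC n)) ^ (n + 1) := by
    show (∏ _k : Fin (n + 1), dfD n 3 2) = _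
    simp [dfD, Matrix.vecHead, Matrix.vecTail, Finset.prod_const]
  rw [hQ, e22, e33, e23, e32]
  have hφ : ((n : ℝ) + 1) * dfTheta n = dfTheta n + Real.pi / 2 := by
    have := theta_mul_n n hn
    ring_nf
    ring_nf at this
    linarith
  have hval : ((dfLam n : ℂ)) ^ (n + 1) + ((dfLam n : ℂ) * dfC n) ^ (n + 1)
      + ((dfLam n : ℂ) * (starRingEnd ℂ) (dfC n)) ^ (n + 1) + ((dfLam n : ℂ)) ^ (n + 1)
      = ((dfLam n ^ (n + 1) * (2 + dfRho n ^ (n + 1) *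
          (2 * Real.cos (((n : ℝ) + 1) * dfTheta n))) : ℝ) : ℂ) := by
    rw [conj_dfC, dfC]
    rw [mul_pow, mul_pow, mul_pow, mul_pow]
    rw [← Complex.exp_nat_mul, ← Complex.exp_nat_mul]
    rw [show ((n + 1 : ℕ) : ℂ) * ((dfTheta n : ℝ) * Complex.I)
        = ((((n : ℝ) + 1) * dfTheta n : ℝ) : ℂ) * Complex.I by push_cast; ring]
    rw [show ((n + 1 : ℕ) : ℂ) * (((-(dfTheta n) : ℝ)) * Complex.I)
        = ((-(((n : ℝ) + 1) * dfTheta n) : ℝ) : ℂ) * Complex.I by push_cast; ring]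
    rw [Complex.exp_mul_I, Complex.exp_mul_I]
    simp only [← Complex.ofReal_cos, ← Complex.ofReal_sin, Real.cos_neg, Real.sin_neg]
    push_cast
    ring
  rw [hval]
  rw [show (0 : ℂ) = ((0 : ℝ) : ℂ) by norm_num]
  rw [Complex.real_lt_real]
  have hs := sin_pos n hn
  have hρ := rho_pos n hn
  have hlam := lam_pos n hn
  have hlamp : 0 < dfLam n ^ (n + 1) := pow_pos hlam (n + 1)
  have hcos : Real.cos (((n : ℝ) + 1) * dfTheta n) = -Real.sin (dfTheta n) := by
    rw [hφ, Real.cos_add_pi_div_two]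
  rw [hcos]
  have hρ1 : 1 ≤ dfRho n := by
    rw [dfRho]; have : 0 < (Real.sin (dfTheta n))⁻¹ := by positivity
    linarith
  have hρpow : dfRho n ≤ dfRho n ^ (n + 1) := le_self_pow₀ hρ1 (by omega)
  have hρs : dfRho n * Real.sin (dfTheta n) = 1 + Real.sin (dfTheta n) := by
    rw [dfRho]; field_simp
  nlinarith [mul_le_mul_of_nonneg_right hρpow hs.le]

end DFAux

/-- For every positive integer `n` there is a 4×4 Hermitian complex matrix `D`
whose entries sum to `1`, such that the quadratic form of `D^{⊗n}` is a
nonnegative real number at every 0/1 vector, while the quadratic form of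
`D^{⊗(n+1)}` is a negative real number at some 0/1 vector. -/
theorem composable_n_times_but_not_n_plus_one (n : ℕ) (hn : 0 < n) :
    ∃ D : Matrix (Fin 4) (Fin 4) ℂ,
      D.IsHermitian ∧ (∑ i, ∑ j, D i j) = 1 ∧
      (∀ u : (Fin n → Fin 4) → ℂ, (∀ i, u i = 0 ∨ u i = 1) →
        0 ≤ star u ⬝ᵥ (kronPow D n).mulVec u) ∧
      (∃ w : (Fin (n + 1) → Fin 4) → ℂ, (∀ i, w i = 0 ∨ w i = 1) ∧
        star w ⬝ᵥ (kronPow D (n + 1)).mulVec w < 0) := by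
  exact ⟨dfD n, dfD_herm n, dfD_sum n hn, fun u hu => quad_nonneg n hn u hu, violation n hn⟩
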